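/- Let c ≥ 1 be a real number and n ≥ 0 an integer. Then ∫_{-2√c}^{2√c} t^{2n} · ((1+c)/(2π)) · √(4c - t²)/((1+c)² - t²) dt = ∑_{k=0}^{n} (binom(2n, k) - binom(2n, k-1)) · c^k, where binom(2n, -1) = 0; that is, the 2n-th moment of the Kesten–McKay law with parameter c equals the closed-walk count polynomial evaluated at c. -/

import Mathlib

open Real MeasureTheory intervalIntegral Finset Set Filter

lemma wallis (m : ℕ) : ∫ θ in (-(π/2))..(π/2), sin θ ^ (2*m) = π * Nat.centralBinom m / 4^m := by
  induction m with
  | zero => simp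
  | succ m ih =>
    have h : 2 * (m+1) = (2*m) + 2 := by ring
    rw [h, integral_sin_pow, ih]
    rw [Real.cos_pi_div_two, Real.cos_neg, Real.cos_pi_div_two]
    have hcb : ((m:ℝ)+1) * (Nat.centralBinom (m+1) : ℝ) = 2 * (2*m+1) * Nat.centralBinom m := by
      exact_mod_cast congrArg (Nat.cast : ℕ → ℝ) (Nat.succ_mul_centralBinom_succ m)
    have h4 : (4:ℝ)^(m+1) = 4 * 4^m := by ring
    have hm1 : ((m:ℝ)+1) ≠ 0 := by positivity
    have h4m : (4:ℝ)^m ≠ 0 := by positivity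
    field_simp
    push_cast
    linear_combination (-2*π*(4:ℝ)^m) * hcb

lemma sin_image (R : ℝ) (hR : 0 < R) :
    (fun θ : ℝ => R * sin θ) '' Ioo (-(π/2)) (π/2) = Ioo (-R) R := by
  have hpi : (0:ℝ) < π/2 := by linarith [pi_pos]
  ext t
  constructor
  · rintro ⟨θ, hθ, rfl⟩
    have hmem : θ ∈ Icc (-(π/2)) (π/2) := Ioo_subset_Icc_self hθ
    have h1 : sin θ < sin (π/2) :=
      Real.strictMonoOn_sin hmem (right_mem_Icc.2 (by linarith)) hθ.2
    have h2 : sin (-(π/2)) < sin θ :=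
      Real.strictMonoOn_sin (left_mem_Icc.2 (by linarith)) hmem hθ.1
    rw [Real.sin_pi_div_two] at h1
    rw [Real.sin_neg, Real.sin_pi_div_two] at h2
    constructor <;> simp only [] <;> nlinarith
  · rintro ⟨h1, h2⟩
    refine ⟨arcsin (t / R), ⟨?_, ?_⟩, ?_⟩
    · rw [Real.neg_pi_div_two_lt_arcsin, lt_div_iff₀ hR]; linarith
    · rw [Real.arcsin_lt_pi_div_two, div_lt_one hR]; exact h2
    · show R * sin (arcsin (t/R)) = t
      rw [Real.sin_arcsin (by rw [le_div_iff₀ hR]; linarith) (by rw [div_le_one hR]; linarith)]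
      field_simp

lemma subst_sin (c : ℝ) (hc : 0 < c) (g : ℝ → ℝ) :
    ∫ t in (-(2*Real.sqrt c))..(2*Real.sqrt c), g t
      = ∫ θ in (-(π/2))..(π/2), (2*Real.sqrt c*cos θ) * g (2*Real.sqrt c*sin θ) := by
  have hR : 0 < 2*Real.sqrt c := by positivity
  have hπ : (0:ℝ) < π/2 := by linarith [pi_pos]
  rw [integral_of_le (by linarith), integral_of_le (by linarith),
    MeasureTheory.integral_Ioc_eq_integral_Ioo, MeasureTheory.integral_Ioc_eq_integral_Ioo]
  rw [← sin_image _ hR]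
  rw [integral_image_eq_integral_abs_deriv_smul measurableSet_Ioo
    (fun θ _ => ((hasDerivAt_sin θ).const_mul (2*Real.sqrt c)).hasDerivWithinAt)
    (fun x hx y hy hxy => by
      exact Real.injOn_sin (Ioo_subset_Icc_self hx) (Ioo_subset_Icc_self hy)
        (mul_left_cancel₀ (ne_of_gt hR) hxy))
    g]
  refine setIntegral_congr_fun measurableSet_Ioo (fun θ hθ => ?_)
  have hcos : 0 < cos θ := Real.cos_pos_of_mem_Ioo hθ
  rw [smul_eq_mul, abs_of_pos (by positivity)]

lemma wallis_cos2 (m : ℕ) :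
    ∫ θ in (-(π/2))..(π/2), sin θ ^ (2*m) * cos θ ^ 2
      = π * Nat.centralBinom m / (2*(m+1) * 4^m) := by
  have h : ∫ θ in (-(π/2))..(π/2), sin θ ^ (2*m) * cos θ ^ 2
      = ∫ θ in (-(π/2))..(π/2), (sin θ ^ (2*m) - sin θ ^ (2*(m+1))) := by
    refine integral_congr (fun θ _ => ?_)
    linear_combination (sin θ^(2*m)) * (Real.sin_sq_add_cos_sq θ)
  rw [h, intervalIntegral.integral_sub (by apply Continuous.intervalIntegrable; fun_prop)
      (by apply Continuous.intervalIntegrable; fun_prop), wallis, wallis]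
  have hcb : ((m:ℝ)+1) * (Nat.centralBinom (m+1) : ℝ) = 2 * (2*m+1) * Nat.centralBinom m := by
    exact_mod_cast congrArg (Nat.cast : ℕ → ℝ) (Nat.succ_mul_centralBinom_succ m)
  have hm1 : ((m:ℝ)+1) ≠ 0 := by positivity
  have h4m : (4:ℝ)^m ≠ 0 := by positivity
  have hcb' : (Nat.centralBinom (m+1) : ℝ) = 2*(2*(m:ℝ)+1) * Nat.centralBinom m / ((m:ℝ)+1) := by
    field_simp; linarith [hcb]
  push_cast
  rw [hcb']
  field_simp
  ring

lemma semicircle (c : ℝ) (hc : 0 < c) (m : ℕ) :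
    ∫ t in (-(2*Real.sqrt c))..(2*Real.sqrt c), t^(2*m) * Real.sqrt (4*c - t^2)
      = 2 * π * c^(m+1) * Nat.centralBinom m / (m+1) := by
  rw [subst_sin c hc (fun t => t^(2*m) * Real.sqrt (4*c - t^2))]
  have hsq : (2*Real.sqrt c)^2 = 4*c := by
    rw [mul_pow, Real.sq_sqrt hc.le]; ring
  have key : ∀ θ ∈ Set.uIcc (-(π/2)) (π/2),
      (2*Real.sqrt c*cos θ) * ((2*Real.sqrt c*sin θ)^(2*m) * Real.sqrt (4*c - (2*Real.sqrt c*sin θ)^2))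
      = (4*c)^(m+1) * (sin θ ^ (2*m) * cos θ ^ 2) := by
    intro θ hθ
    rw [Set.uIcc_of_le (by linarith [pi_pos])] at hθ
    have hcos : 0 ≤ cos θ := Real.cos_nonneg_of_mem_Icc hθ
    have h1 : 4*c - (2*Real.sqrt c*sin θ)^2 = (2*Real.sqrt c*cos θ)^2 := by
      nlinarith [Real.sin_sq_add_cos_sq θ, Real.sq_sqrt hc.le]
    rw [h1, Real.sqrt_sq (by positivity)]
    have h2 : (2*Real.sqrt c*sin θ)^(2*m) = (4*c)^m * sin θ^(2*m) := by
      calc (2*Real.sqrt c*sin θ)^(2*m) = ((2*Real.sqrt c*sin θ)^2)^m := by rw [← pow_mul]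
        _ = ((4*c)*sin θ^2)^m := by
              rw [show (2*Real.sqrt c*sin θ)^2 = (4*c)*sin θ^2 from by
                nlinarith [Real.sq_sqrt hc.le]]
        _ = (4*c)^m * (sin θ^2)^m := mul_pow _ _ _
        _ = (4*c)^m * sin θ^(2*m) := by rw [← pow_mul]
    rw [h2]
    linear_combination (4*cos θ^2*(4*c)^m*sin θ^(2*m)) * (Real.sq_sqrt hc.le)
  rw [integral_congr key, intervalIntegral.integral_const_mul, wallis_cos2]
  have hm1 : ((m:ℝ)+1) ≠ 0 := by positivity
  have h4m : (4:ℝ)^m ≠ 0 := by positivity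
  field_simp
  ring

lemma Tint (c : ℝ) (hc : 1 < c) :
    ∫ θ in (-(π/2))..(π/2), 1/((1+c)^2 - 4*c*sin θ^2) = π/(c^2-1) := by
  have hc1 : (0:ℝ) < c - 1 := by linarith
  have hc2 : (0:ℝ) < c + 1 := by linarith
  have hr : (0:ℝ) < (c-1)/(c+1) := by positivity
  set r : ℝ := (c-1)/(c+1) with hrdef
  have hD : ∀ θ : ℝ, (1+c)^2 - 4*c*sin θ^2 ≠ 0 := by
    intro θ
    nlinarith [sin_sq_le_one θ, sq_nonneg (c-1)]
  have hderiv : ∀ θ ∈ Set.Ioo (-(π/2)) (π/2),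
      HasDerivAt (fun θ => (1/(c^2-1)) * arctan (r * tan θ))
        (1/((1+c)^2 - 4*c*sin θ^2)) θ := by
    intro θ hθ
    have hcos : 0 < cos θ := Real.cos_pos_of_mem_Ioo hθ
    have h1 : HasDerivAt (fun θ => r * tan θ) (r * (1/cos θ^2)) θ :=
      (Real.hasDerivAt_tan hcos.ne').const_mul r
    have h2 : HasDerivAt (fun θ => arctan (r * tan θ))
        ((1/(1+(r*tan θ)^2)) * (r * (1/cos θ^2))) θ :=
      h1.arctan
    have h3 := h2.const_mul (1/(c^2-1))
    convert h3 using 1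
    · rfl
    · rfl
    have hs := Real.sin_sq_add_cos_sq θ
    have hD' := hD θ
    have hc21 : c^2 - 1 ≠ 0 := by nlinarith
    have hs2 : sin θ^2 = 1 - cos θ^2 := by linarith
    have h1c : (1+c) ≠ 0 := by linarith
    have h4 : 1 + (r*tan θ)^2 = ((1+c)^2 - 4*c*sin θ^2) / ((c+1)^2 * cos θ^2) := by
      rw [Real.tan_eq_sin_div_cos, hrdef, mul_pow, div_pow, div_pow, hs2]
      field_simp
      ring
    rw [h4, hrdef, one_div_div, hs2]
    rw [hs2] at hD'
    field_simp [hD']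
    ring
  have hint : IntervalIntegrable (fun θ => 1/((1+c)^2 - 4*c*sin θ^2)) volume (-(π/2)) (π/2) := by
    apply Continuous.intervalIntegrable
    exact continuous_const.div (by fun_prop) hD
  have htop : Tendsto (fun θ => (1/(c^2-1)) * arctan (r * tan θ)) (nhdsWithin (π/2) (Set.Iio (π/2)))
      (nhds ((1/(c^2-1)) * (π/2))) := by
    apply Tendsto.const_mul
    have h1 : Tendsto (fun θ => r * tan θ) (nhdsWithin (π/2) (Set.Iio (π/2))) atTop :=
      Tendsto.const_mul_atTop hr Real.tendsto_tan_pi_div_two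
    exact (Real.tendsto_arctan_atTop.mono_right nhdsWithin_le_nhds).comp h1
  have hbot : Tendsto (fun θ => (1/(c^2-1)) * arctan (r * tan θ)) (nhdsWithin (-(π/2)) (Set.Ioi (-(π/2))))
      (nhds ((1/(c^2-1)) * (-(π/2)))) := by
    apply Tendsto.const_mul
    have h1 : Tendsto (fun θ => r * tan θ) (nhdsWithin (-(π/2)) (Set.Ioi (-(π/2)))) atBot :=
      Tendsto.const_mul_atBot hr Real.tendsto_tan_neg_pi_div_two
    exact (Real.tendsto_arctan_atBot.mono_right nhdsWithin_le_nhds).comp h1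
  rw [integral_eq_sub_of_hasDerivAt_of_tendsto (by linarith [pi_pos]) hderiv hint hbot htop]
  have : c^2 - 1 ≠ 0 := by nlinarith
  field_simp
  ring

lemma base (c : ℝ) (hc : 1 < c) :
    (∫ t in (-(2*Real.sqrt c))..(2*Real.sqrt c),
        (1+c) / (2*π) * Real.sqrt (4*c - t^2) / ((1+c)^2 - t^2)) = 1 := by
  have hc0 : (0:ℝ) < c := by linarith
  have hD : ∀ θ : ℝ, (1+c)^2 - 4*c*sin θ^2 ≠ 0 := by
    intro θ; nlinarith [sin_sq_le_one θ, sq_nonneg (c-1)]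
  rw [subst_sin c hc0 (fun t => (1+c) / (2*π) * Real.sqrt (4*c - t^2) / ((1+c)^2 - t^2))]
  have key : ∀ θ ∈ Set.uIcc (-(π/2)) (π/2),
      (2*Real.sqrt c*cos θ) * ((1+c) / (2*π) * Real.sqrt (4*c - (2*Real.sqrt c*sin θ)^2)
          / ((1+c)^2 - (2*Real.sqrt c*sin θ)^2))
      = (1+c)/(2*π) - ((1+c)*(c-1)^2/(2*π)) * (1/((1+c)^2 - 4*c*sin θ^2)) := by
    intro θ hθ
    rw [Set.uIcc_of_le (by linarith [pi_pos])] at hθ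
    have hcos : 0 ≤ cos θ := Real.cos_nonneg_of_mem_Icc hθ
    have h1 : 4*c - (2*Real.sqrt c*sin θ)^2 = (2*Real.sqrt c*cos θ)^2 := by
      nlinarith [Real.sin_sq_add_cos_sq θ, Real.sq_sqrt hc0.le]
    have h2 : (2*Real.sqrt c*sin θ)^2 = 4*c*sin θ^2 := by
      nlinarith [Real.sq_sqrt hc0.le]
    rw [h1, Real.sqrt_sq (by positivity), h2]
    have hD' := hD θ
    have hsq : (Real.sqrt c)^2 = c := Real.sq_sqrt hc0.le
    have hs := Real.sin_sq_add_cos_sq θ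
    field_simp
    have hD'' : (1 + c) ^ 2 - c * 4 * sin θ ^ 2 ≠ 0 := by rwa [mul_comm c 4]
    field_simp
    linear_combination 4*cos θ^2 * hsq + 4*c * hs
  rw [integral_congr key]
  rw [intervalIntegral.integral_sub (by apply Continuous.intervalIntegrable; fun_prop)
    (by
      apply Continuous.intervalIntegrable
      apply Continuous.mul continuous_const
      exact continuous_const.div (by fun_prop) hD)]
  rw [intervalIntegral.integral_const, intervalIntegral.integral_const_mul, Tint c hc]
  have h3 : c^2 - 1 ≠ 0 := by nlinarith
  have h4 : (1+c) ≠ 0 := by linarith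
  rw [smul_eq_mul]
  field_simp
  ring

lemma step (c : ℝ) (hc : 1 < c) (n : ℕ) :
    (∫ t in (-(2*Real.sqrt c))..(2*Real.sqrt c),
        t ^ (2*(n+1)) * ((1+c) / (2*π) * Real.sqrt (4*c - t^2) / ((1+c)^2 - t^2)))
    = (1+c)^2 * (∫ t in (-(2*Real.sqrt c))..(2*Real.sqrt c),
        t ^ (2*n) * ((1+c) / (2*π) * Real.sqrt (4*c - t^2) / ((1+c)^2 - t^2)))
      - (1+c)*c^(n+1)*((Nat.centralBinom n : ℝ)/(n+1)) := by
  have hc0 : (0:ℝ) < c := by linarith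
  have hR : (0:ℝ) < 2*Real.sqrt c := by positivity
  have hA : ∀ t ∈ Set.uIcc (-(2*Real.sqrt c)) (2*Real.sqrt c), (1+c)^2 - t^2 ≠ 0 := by
    intro t ht
    rw [Set.uIcc_of_le (by linarith)] at ht
    have h1 : t^2 ≤ (2*Real.sqrt c)^2 := sq_le_sq' ht.1 ht.2
    have h2 : (2*Real.sqrt c)^2 = 4*c := by
      rw [mul_pow, Real.sq_sqrt hc0.le]; ring
    nlinarith [sq_nonneg (c-1)]
  have key : ∀ t ∈ Set.uIcc (-(2*Real.sqrt c)) (2*Real.sqrt c),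
      t ^ (2*(n+1)) * ((1+c) / (2*π) * Real.sqrt (4*c - t^2) / ((1+c)^2 - t^2))
      = (1+c)^2 * (t ^ (2*n) * ((1+c) / (2*π) * Real.sqrt (4*c - t^2) / ((1+c)^2 - t^2)))
        - (1+c) / (2*π) * (t^(2*n) * Real.sqrt (4*c - t^2)) := by
    intro t ht
    have h := hA t ht
    field_simp
    ring
  rw [integral_congr key]
  have hcont1 : ContinuousOn
      (fun t : ℝ => (1+c)^2 * (t ^ (2*n) * ((1+c) / (2*π) * Real.sqrt (4*c - t^2) / ((1+c)^2 - t^2))))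
      (Set.uIcc (-(2*Real.sqrt c)) (2*Real.sqrt c)) := by
    apply ContinuousOn.mul continuousOn_const
    apply ContinuousOn.mul (Continuous.continuousOn (by fun_prop))
    apply ContinuousOn.div
    · exact Continuous.continuousOn (by fun_prop)
    · exact Continuous.continuousOn (by fun_prop)
    · exact hA
  rw [intervalIntegral.integral_sub (hcont1.intervalIntegrable)
    (by apply Continuous.intervalIntegrable; fun_prop)]
  rw [intervalIntegral.integral_const_mul, intervalIntegral.integral_const_mul, semicircle c hc0 n]
  have hn1 : ((n:ℝ)+1) ≠ 0 := by positivity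
  field_simp

lemma g_pascal (n k : ℕ) :
    (((2*(n+1)).choose k : ℝ) - if k = 0 then 0 else ((2*(n+1)).choose (k-1) : ℝ))
    = (((2*n).choose k : ℝ) - if k = 0 then 0 else ((2*n).choose (k-1) : ℝ))
      + 2 * (if k = 0 then 0 else (((2*n).choose (k-1) : ℝ) - if k-1 = 0 then 0 else ((2*n).choose (k-2) : ℝ)))
      + (if k ≤ 1 then 0 else (((2*n).choose (k-2) : ℝ) - if k-2 = 0 then 0 else ((2*n).choose (k-3) : ℝ))) := by
  have e1 : 2*(n+1) = (2*n+1)+1 := by ring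
  have p1 : ∀ j : ℕ, ((2*(n+1)).choose (j+2) : ℝ)
      = ((2*n).choose (j+2) : ℝ) + 2*((2*n).choose (j+1) : ℝ) + ((2*n).choose j : ℝ) := by
    intro j
    have : (2*(n+1)).choose (j+2) = (2*n).choose (j+2) + 2*((2*n).choose (j+1)) + (2*n).choose j := by
      rw [e1]
      simp only [Nat.choose_succ_succ, Nat.succ_eq_add_one]
      ring
    exact_mod_cast congrArg (Nat.cast : ℕ → ℝ) this
  match k with
  | 0 => simp
  | 1 =>
    simp only [if_neg one_ne_zero, if_pos rfl]
    norm_num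
    ring
  | 2 =>
    have q1 := p1 0
    have q2 : ((2*(n+1)).choose 1 : ℝ) = ((2*n).choose 1 : ℝ) + 2*((2*n).choose 0 : ℝ) := by
      have : (2*(n+1)).choose 1 = (2*n).choose 1 + 2*((2*n).choose 0) := by
        rw [e1]; simp [Nat.choose_succ_succ]; omega
      exact_mod_cast congrArg (Nat.cast : ℕ → ℝ) this
    norm_num at q1 q2 ⊢
    linarith [q1, q2]
  | (k+3) =>
    have q1 := p1 (k+1)
    have q2 := p1 k
    simp only [if_neg (Nat.succ_ne_zero _), Nat.add_sub_cancel,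
      show k+3-1 = k+2 from by omega, show k+3-2 = k+1 from by omega,
      show k+3-3 = k from by omega, show ¬(k+3 ≤ 1) from by omega, if_false,
      show k+2-1 = k+1 from by omega, show ¬(k+2 = 0) from by omega,
      show ¬(k+1 = 0) from by omega]
    linarith [q1, q2]

lemma shift1 (g : ℕ → ℝ) (c : ℝ) (N : ℕ) :
    ∑ k ∈ range (N+1), (if k = 0 then 0 else g (k-1)) * c^k
      = ∑ k ∈ range N, g k * c^(k+1) := by
  rw [Finset.sum_range_succ']
  simp

lemma shift2 (g : ℕ → ℝ) (c : ℝ) (N : ℕ) :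
    ∑ k ∈ range (N+2), (if k ≤ 1 then 0 else g (k-2)) * c^k
      = ∑ k ∈ range N, g k * c^(k+2) := by
  rw [Finset.sum_range_succ']
  have e : ∀ k : ℕ, (if k+1 ≤ 1 then (0:ℝ) else g (k+1-2)) * c^(k+1)
      = (if k = 0 then 0 else g (k-1)) * c^(k+1) := by
    intro k
    match k with
    | 0 => norm_num
    | (k+1) =>
      simp only [show k+1+1-2 = k from by omega, show k+1-1 = k from by omega,
        if_neg (Nat.succ_ne_zero k), show ¬(k+1+1 ≤ 1) from by omega, if_false]
  rw [Finset.sum_congr rfl (fun k _ => e k)]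
  simp only [if_pos (by norm_num : (0:ℕ) ≤ 1), zero_mul, add_zero]
  rw [Finset.sum_range_succ']
  simp only [if_neg (Nat.succ_ne_zero _), Nat.add_sub_cancel, if_pos rfl, if_true, zero_mul, add_zero]

lemma main_alg (g f : ℕ → ℝ) (c : ℝ) (n : ℕ)
    (hpas : ∀ k, f k = g k + 2*(if k = 0 then 0 else g (k-1)) + (if k ≤ 1 then 0 else g (k-2)))
    (B : ℝ) (hgn : g n = B) (hgn1 : g (n+1) = -B) :
    ∑ k ∈ range (n+2), f k * c^k
      = (1+c)^2 * ∑ k ∈ range (n+1), g k * c^k - (1+c)*c^(n+1)*B := by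
  have e1 : ∑ k ∈ range (n+2), f k * c^k
      = ∑ k ∈ range (n+2), (g k * c^k + 2*((if k = 0 then 0 else g (k-1)) * c^k)
          + (if k ≤ 1 then 0 else g (k-2)) * c^k) :=
    Finset.sum_congr rfl (fun k _ => by rw [hpas k]; ring)
  rw [e1, Finset.sum_add_distrib, Finset.sum_add_distrib, ← Finset.mul_sum,
    shift1 g c (n+1), shift2 g c n, Finset.sum_range_succ (fun k => g k * c^k)]
  have e2 : (1+c)^2 * ∑ k ∈ range (n+1), g k * c^k
      = ∑ k ∈ range (n+1), (g k * c^k + 2*(g k * c^(k+1)) + g k * c^(k+2)) := by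
    rw [Finset.mul_sum]
    exact Finset.sum_congr rfl (fun k _ => by ring)
  rw [e2, Finset.sum_add_distrib, Finset.sum_add_distrib, ← Finset.mul_sum,
    Finset.sum_range_succ (fun k => g k * c^(k+2)), hgn, hgn1]
  ring

lemma rhs_rec (c : ℝ) (n : ℕ) :
    ∑ k ∈ range (n+1+1), (((2*(n+1)).choose k : ℝ) - if k = 0 then 0 else ((2*(n+1)).choose (k-1) : ℝ)) * c^k
    = (1+c)^2 * ∑ k ∈ range (n+1), (((2*n).choose k : ℝ) - if k = 0 then 0 else ((2*n).choose (k-1) : ℝ)) * c^k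
      - (1+c)*c^(n+1)*((Nat.centralBinom n : ℝ)/(n+1)) := by
  have hn1 : ((n:ℝ)+1) ≠ 0 := by positivity
  have hcb : (Nat.centralBinom n : ℝ) = ((2*n).choose n : ℝ) := by
    exact_mod_cast congrArg (Nat.cast : ℕ → ℝ) (Nat.centralBinom_eq_two_mul_choose n)
  have hgn1 : (((2*n).choose (n+1) : ℝ) - if n+1 = 0 then 0 else ((2*n).choose (n+1-1) : ℝ))
      = -((Nat.centralBinom n : ℝ)/(n+1)) := by
    rw [if_neg (Nat.succ_ne_zero n), Nat.add_sub_cancel]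
    have h := Nat.choose_succ_right_eq (2*n) n
    rw [show 2*n - n = n from by omega] at h
    have hR : ((2*n).choose (n+1) : ℝ) * ((n:ℝ)+1) = ((2*n).choose n : ℝ) * n := by
      exact_mod_cast congrArg (Nat.cast : ℕ → ℝ) h
    rw [hcb]
    field_simp
    linarith [hR]
  have hgn : (((2*n).choose n : ℝ) - if n = 0 then 0 else ((2*n).choose (n-1) : ℝ))
      = (Nat.centralBinom n : ℝ)/(n+1) := by
    rw [hcb]
    match n with
    | 0 => norm_num
    | (m+1) =>
      rw [if_neg (Nat.succ_ne_zero m), Nat.add_sub_cancel]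
      have h := Nat.choose_succ_right_eq (2*(m+1)) m
      rw [show 2*(m+1) - m = m+2 from by omega] at h
      have hR : ((2*(m+1)).choose (m+1) : ℝ) * ((m:ℝ)+1) = ((2*(m+1)).choose m : ℝ) * ((m:ℝ)+2) := by
        exact_mod_cast congrArg (Nat.cast : ℕ → ℝ) h
      have hm2 : ((m:ℝ)+2) ≠ 0 := by positivity
      field_simp
      push_cast
      nlinarith [hR]
  exact main_alg
    (fun k => (((2*n).choose k : ℝ) - if k = 0 then 0 else ((2*n).choose (k-1) : ℝ)))
    (fun k => (((2*(n+1)).choose k : ℝ) - if k = 0 then 0 else ((2*(n+1)).choose (k-1) : ℝ)))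
    c n (fun k => g_pascal n k) ((Nat.centralBinom n : ℝ)/(n+1)) hgn hgn1

lemma c_one (n : ℕ) :
    (∫ t in (-(2*Real.sqrt 1))..(2*Real.sqrt 1),
        t ^ (2*n) * ((1+1) / (2*π) * Real.sqrt (4*1 - t^2) / ((1+1)^2 - t^2)))
    = (Nat.centralBinom n : ℝ) := by
  rw [subst_sin 1 one_pos (fun t => t ^ (2*n) * ((1+1) / (2*π) * Real.sqrt (4*1 - t^2) / ((1+1)^2 - t^2)))]
  have key : ∀ᵐ θ : ℝ ∂volume, θ ∈ Set.uIoc (-(π/2)) (π/2) →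
      (2*Real.sqrt 1*cos θ) * ((2*Real.sqrt 1*sin θ) ^ (2*n) *
        ((1+1) / (2*π) * Real.sqrt (4*1 - (2*Real.sqrt 1*sin θ)^2) / ((1+1)^2 - (2*Real.sqrt 1*sin θ)^2)))
      = sin θ ^ (2*n) * (4^n / π) := by
    have hnull : ({π/2} : Set ℝ)ᶜ ∈ ae (volume : Measure ℝ) :=
      MeasureTheory.compl_mem_ae_iff.mpr (Real.volume_singleton)
    filter_upwards [hnull] with θ hθ hmem
    rw [Set.uIoc_of_le (by linarith [pi_pos])] at hmem
    have hθ' : θ ≠ π/2 := by simpa using hθ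
    have hlt : θ < π/2 := lt_of_le_of_ne hmem.2 hθ'
    have hcos : 0 < cos θ := Real.cos_pos_of_mem_Ioo ⟨hmem.1, hlt⟩
    rw [Real.sqrt_one]
    have h1 : 4*1 - (2*1*sin θ)^2 = (2*1*cos θ)^2 := by
      nlinarith [Real.sin_sq_add_cos_sq θ]
    have h2 : (2*1*sin θ)^(2*n) = 4^n * sin θ^(2*n) := by
      calc (2*1*sin θ)^(2*n) = ((2*1*sin θ)^2)^n := by rw [← pow_mul]
        _ = (4*sin θ^2)^n := by rw [show (2*1*sin θ)^2 = 4*sin θ^2 from by ring]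
        _ = 4^n * (sin θ^2)^n := mul_pow _ _ _
        _ = 4^n * sin θ^(2*n) := by rw [← pow_mul]
    rw [h1, Real.sqrt_sq (by positivity), h2]
    have hs := Real.sin_sq_add_cos_sq θ
    have hπ : π ≠ 0 := pi_ne_zero
    have h3 : (1+1)^2 - (2*1*sin θ)^2 = (2*cos θ)^2 := by nlinarith [hs]
    rw [h3]
    field_simp
    ring
  rw [intervalIntegral.integral_congr_ae key, intervalIntegral.integral_mul_const, wallis]
  have hπ : π ≠ 0 := pi_ne_zero
  have h4 : (4:ℝ)^n ≠ 0 := by positivity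
  field_simp

lemma telescope (n : ℕ) :
    ∑ k ∈ range (n + 1),
        (((2 * n).choose k : ℝ) - if k = 0 then 0 else ((2 * n).choose (k - 1) : ℝ)) * (1:ℝ) ^ k
      = Nat.centralBinom n := by
  have e : ∀ k, (((2 * n).choose k : ℝ) - if k = 0 then 0 else ((2 * n).choose (k - 1) : ℝ)) * (1:ℝ)^k
      = (((2 * n).choose k : ℝ) - if k = 0 then 0 else ((2 * n).choose (k - 1) : ℝ)) := by
    intro k; rw [one_pow, mul_one]
  rw [Finset.sum_congr rfl (fun k _ => e k), Finset.sum_range_succ']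
  simp only [if_neg (Nat.succ_ne_zero _), Nat.add_sub_cancel, if_pos rfl, sub_zero]
  rw [Finset.sum_range_sub (fun k => ((2*n).choose k : ℝ))]
  simp [Nat.centralBinom_eq_two_mul_choose]

/-- For real `c ≥ 1` and `n ≥ 0`, the `2n`-th moment of the Kesten–McKay law with
parameter `c` equals `∑_{k=0}^{n} (binom(2n,k) - binom(2n,k-1)) * c^k`, with the
convention `binom(2n,-1) = 0`. -/
theorem stmt_9 (c : ℝ) (hc : 1 ≤ c) (n : ℕ) :
    ∫ t in (-(2 * Real.sqrt c))..(2 * Real.sqrt c),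
        t ^ (2 * n) *
          ((1 + c) / (2 * Real.pi) * Real.sqrt (4 * c - t ^ 2) / ((1 + c) ^ 2 - t ^ 2)) =
      ∑ k ∈ Finset.range (n + 1),
        (((2 * n).choose k : ℝ) - if k = 0 then 0 else ((2 * n).choose (k - 1) : ℝ)) *
          c ^ k := by
  rcases eq_or_lt_of_le hc with heq | hlt
  · subst heq
    rw [telescope n]
    exact c_one n
  · induction n with
    | zero =>
      have e : ∀ t ∈ Set.uIcc (-(2*Real.sqrt c)) (2*Real.sqrt c),
          t ^ (2*0) * ((1+c) / (2*π) * Real.sqrt (4*c - t^2) / ((1+c)^2 - t^2))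
          = (1+c) / (2*π) * Real.sqrt (4*c - t^2) / ((1+c)^2 - t^2) := by
        intro t _
        norm_num
      rw [intervalIntegral.integral_congr e, base c hlt]
      simp
    | succ n ih =>
      rw [step c hlt n, ih, ← rhs_rec c n]
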